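/- Let X be a compact ultrametric space, p ∈ [1,∞), and μ, ν Borel probability measures on X. Let Π be an optimal coupling of (μ,ν) for the cost d^p, i.e. a coupling achieving ∫_{X×X} d(a,b)^p dΠ(a,b) = W_p(μ,ν)^p. Then for every closed ball B of X one has Π(B × (X∖B)) = max(μ(B) − ν(B), 0). -/

import Mathlib

open MeasureTheory
open scoped ENNReal NNReal

/-- A coupling of `μ` and `ν`. -/
def IsCoupling {X : Type*} [MeasurableSpace X] (π : Measure (X × X)) (μ ν : Measure X) : Prop :=
  IsProbabilityMeasure π ∧ π.map Prod.fst = μ ∧ π.map Prod.snd = ν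

/-- The `L^p` Wasserstein distance between two (probability) measures. -/
noncomputable def Wp {X : Type*} [MetricSpace X] [MeasurableSpace X] (p : ℝ)
    (μ ν : Measure X) : ℝ :=
  sInf {c : ℝ | ∃ π : Measure (X × X), IsCoupling π μ ν ∧
      c = ∫ ab, dist ab.1 ab.2 ^ p ∂π} ^ (1 / p)

section aux

lemma ultra_out {X : Type*} [MetricSpace X]
    (hX : ∀ x y z : X, dist x z ≤ max (dist x y) (dist y z))
    {x a b : X} {r : ℝ} (ha : a ∈ Metric.closedBall x r) (hb : b ∉ Metric.closedBall x r) :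
    dist a b = dist x b := by
  simp only [Metric.mem_closedBall, not_le] at ha hb
  rw [dist_comm] at ha hb
  have h1 : dist a b ≤ dist x b := by
    have h := hX a x b
    rw [dist_comm a x] at h
    exact h.trans (max_le (ha.trans hb.le) le_rfl)
  have h2 : dist x b ≤ dist a b := by
    have h := hX x a b
    rcases le_max_iff.mp h with h' | h'
    · linarith
    · exact h'
  linarith

lemma ultra_in {X : Type*} [MetricSpace X]
    (hX : ∀ x y z : X, dist x z ≤ max (dist x y) (dist y z))
    {x a b : X} {r : ℝ} (ha : a ∈ Metric.closedBall x r) (hb : b ∈ Metric.closedBall x r) :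
    dist a b ≤ r := by
  simp only [Metric.mem_closedBall] at ha hb
  exact (hX a x b).trans (max_le ha (by rwa [dist_comm x b]))

/-- strict lower bound for the lintegral of an a.e.-strictly-bigger-than-constant function. -/
lemma lintegral_const_lt {Y : Type*} [MeasurableSpace Y] (σ : Measure Y) [IsFiniteMeasure σ]
    (f : Y → ℝ≥0∞) (hf : Measurable f) (R : ℝ≥0∞) (hR : R ≠ ∞) (h : ∀ᵐ y ∂σ, R < f y)
    (hσ0 : σ ≠ 0) :
    R * σ Set.univ < ∫⁻ y, f y ∂σ := by
  by_contra hcon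
  push_neg at hcon
  have hle : ∀ᵐ y ∂σ, R ≤ f y := h.mono fun y hy => hy.le
  have hsub : ∫⁻ y, f y - R ∂σ = ∫⁻ y, f y ∂σ - R * σ Set.univ := by
    have := lintegral_sub (f := fun y => f y) (g := fun _ => R) measurable_const
      (by rw [lintegral_const]; exact ENNReal.mul_ne_top hR (measure_ne_top σ _)) hle
    simpa [lintegral_const] using this
  have h0 : ∫⁻ y, f y - R ∂σ = 0 := by
    rw [hsub]; exact tsub_eq_zero_of_le hcon
  have hm : Measurable fun y => f y - R := hf.sub measurable_const
  rw [lintegral_eq_zero_iff hm] at h0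
  have hfalse : ∀ᵐ y ∂σ, False := by
    filter_upwards [h, h0] with y h1 h2
    exact absurd (lt_of_lt_of_le h1 (tsub_eq_zero_iff_le.mp h2)) (lt_irrefl _)
  haveI : (ae σ).NeBot := ae_neBot.mpr hσ0
  exact hfalse.exists.choose_spec

end aux

theorem optimal_coupling_ball_flux
    {X : Type*} [MetricSpace X] [CompactSpace X] [MeasurableSpace X] [BorelSpace X]
    (hX : ∀ x y z : X, dist x z ≤ max (dist x y) (dist y z))
    (p : ℝ) (hp : 1 ≤ p)
    (μ ν : Measure X) [IsProbabilityMeasure μ] [IsProbabilityMeasure ν]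
    (π : Measure (X × X)) (hπ : IsCoupling π μ ν)
    (hopt : ∫ ab, dist ab.1 ab.2 ^ p ∂π = Wp p μ ν ^ p) :
    ∀ (x : X) (r : ℝ),
      (π (Metric.closedBall x r ×ˢ (Metric.closedBall x r)ᶜ)).toReal =
        max ((μ (Metric.closedBall x r)).toReal - (ν (Metric.closedBall x r)).toReal) 0 := by
  intro x r
  haveI hπprob : IsProbabilityMeasure π := hπ.1
  obtain ⟨-, hfst, hsnd⟩ := hπ
  set B := Metric.closedBall x r with hBdef
  have hB : MeasurableSet B := measurableSet_closedBall
  set S := B ×ˢ Bᶜ with hSdef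
  set T := Bᶜ ×ˢ B with hTdef
  have hS : MeasurableSet S := hB.prod hB.compl
  have hT : MeasurableSet T := hB.compl.prod hB
  -- marginal identities
  have hμB : μ B = π (B ×ˢ B) + π S := by
    rw [← hfst, Measure.map_apply measurable_fst hB]
    have hsplit : Prod.fst ⁻¹' B = (B ×ˢ B) ∪ S := by
      ext ab
      simp only [Set.mem_preimage, Set.mem_union, hSdef, Set.mem_prod, Set.mem_compl_iff]
      tauto
    rw [hsplit, measure_union (Set.disjoint_left.mpr fun ab h1 h2 => h2.2 h1.2) hS]
  have hνB : ν B = π (B ×ˢ B) + π T := by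
    rw [← hsnd, Measure.map_apply measurable_snd hB]
    have hsplit : Prod.snd ⁻¹' B = (B ×ˢ B) ∪ T := by
      ext ab
      simp only [Set.mem_preimage, Set.mem_union, hTdef, Set.mem_prod, Set.mem_compl_iff]
      tauto
    rw [hsplit, measure_union (Set.disjoint_left.mpr fun ab h1 h2 => h2.1 h1.1) hT]
  -- the main claim
  have key : π S = 0 ∨ π T = 0 := by
    by_contra hcontra
    push_neg at hcontra
    obtain ⟨hs0, ht0⟩ := hcontra
    have hp0 : (0:ℝ) < p := lt_of_lt_of_le one_pos hp
    -- the radius is nonnegative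
    have hr : 0 ≤ r := by
      by_contra hrneg
      push_neg at hrneg
      apply hs0
      have hBempty : B = ∅ := Metric.closedBall_eq_empty.mpr hrneg
      rw [hSdef, hBempty, Set.empty_prod, measure_empty]
    -- cost functions
    have hc_cont : Continuous (fun ab : X × X => dist ab.1 ab.2 ^ p) :=
      continuous_dist.rpow_const (fun ab => Or.inr (le_of_lt hp0))
    have hc_nonneg : ∀ ab : X × X, 0 ≤ dist ab.1 ab.2 ^ p :=
      fun ab => Real.rpow_nonneg dist_nonneg p
    have hC_meas : Measurable (fun ab : X × X => ENNReal.ofReal (dist ab.1 ab.2 ^ p)) :=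
      ENNReal.measurable_ofReal.comp hc_cont.measurable
    have hg_cont : Continuous (fun y : X => dist x y ^ p) :=
      (continuous_const.dist continuous_id).rpow_const (fun y => Or.inr (le_of_lt hp0))
    have hG_meas : Measurable (fun y : X => ENNReal.ofReal (dist x y ^ p)) :=
      ENNReal.measurable_ofReal.comp hg_cont.measurable
    -- a uniform bound on distances
    obtain ⟨D, hD⟩ : ∃ D : ℝ, ∀ a b : X, dist a b ≤ D := by
      obtain ⟨D, hD⟩ := Metric.isBounded_iff.mp (isCompact_univ (X := X)).isBounded
      exact ⟨D, fun a b => hD (Set.mem_univ a) (Set.mem_univ b)⟩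
    set M : ℝ≥0∞ := ENNReal.ofReal (D ^ p) with hMdef
    have hM : M ≠ ∞ := ENNReal.ofReal_ne_top
    have hCM : ∀ ab : X × X, ENNReal.ofReal (dist ab.1 ab.2 ^ p) ≤ M :=
      fun ab => ENNReal.ofReal_le_ofReal
        (Real.rpow_le_rpow dist_nonneg (hD _ _) hp0.le)
    have hGM : ∀ y : X, ENNReal.ofReal (dist x y ^ p) ≤ M :=
      fun y => ENNReal.ofReal_le_ofReal
        (Real.rpow_le_rpow dist_nonneg (hD _ _) hp0.le)
    have costfin : ∀ (σ : Measure (X × X)), σ Set.univ ≠ ∞ →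
        ∫⁻ ab, ENNReal.ofReal (dist ab.1 ab.2 ^ p) ∂σ ≠ ∞ := by
      intro σ hσ
      have hle : ∫⁻ ab, ENNReal.ofReal (dist ab.1 ab.2 ^ p) ∂σ ≤ M * σ Set.univ := by
        calc ∫⁻ ab, ENNReal.ofReal (dist ab.1 ab.2 ^ p) ∂σ
            ≤ ∫⁻ _, M ∂σ := lintegral_mono hCM
          _ = M * σ Set.univ := lintegral_const M
      exact ne_top_of_le_ne_top (ENNReal.mul_ne_top hM hσ) hle
    have gfin : ∀ (σ : Measure X), σ Set.univ ≠ ∞ →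
        ∫⁻ y, ENNReal.ofReal (dist x y ^ p) ∂σ ≠ ∞ := by
      intro σ hσ
      have hle : ∫⁻ y, ENNReal.ofReal (dist x y ^ p) ∂σ ≤ M * σ Set.univ := by
        calc ∫⁻ y, ENNReal.ofReal (dist x y ^ p) ∂σ
            ≤ ∫⁻ _, M ∂σ := lintegral_mono hGM
          _ = M * σ Set.univ := lintegral_const M
      exact ne_top_of_le_ne_top (ENNReal.mul_ne_top hM hσ) hle
    have int_eq : ∀ (σ : Measure (X × X)), ∫ ab, dist ab.1 ab.2 ^ p ∂σ =
        (∫⁻ ab, ENNReal.ofReal (dist ab.1 ab.2 ^ p) ∂σ).toReal := fun σ =>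
      integral_eq_lintegral_of_nonneg_ae (ae_of_all _ hc_nonneg) hc_cont.aestronglyMeasurable
    -- the modification parameters
    set ε := min (π S) (π T) with hεdef
    have hε0 : ε ≠ 0 := by
      have h1 : 0 < π S := pos_iff_ne_zero.mpr hs0
      have h2 : 0 < π T := pos_iff_ne_zero.mpr ht0
      exact (lt_min h1 h2).ne'
    have hεfin : ε ≠ ∞ := ne_top_of_le_ne_top (measure_ne_top π S) (min_le_left _ _)
    have hdivS : ε / π S ≤ 1 := by
      have := ENNReal.div_le_div_right (min_le_left (π S) (π T)) (π S)
      rwa [ENNReal.div_self hs0 (measure_ne_top π S)] at this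
    have hdivT : ε / π T ≤ 1 := by
      have := ENNReal.div_le_div_right (min_le_right (π S) (π T)) (π T)
      rwa [ENNReal.div_self ht0 (measure_ne_top π T)] at this
    set α := (ε / π S) • π.restrict S with hαdef
    set β := (ε / π T) • π.restrict T with hβdef
    set ρ := π.restrict (S ∪ T)ᶜ + ((1 : ℝ≥0∞) - ε / π S) • π.restrict S
        + ((1 : ℝ≥0∞) - ε / π T) • π.restrict T with hρdef
    have hdisj : Disjoint S T := by
      rw [Set.disjoint_left]
      intro ab h1 h2
      exact h2.1 h1.1
    have hdecomp : π = ρ + α + β := by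
      have h1 : ((1 : ℝ≥0∞) - ε / π S) • π.restrict S + (ε / π S) • π.restrict S
          = π.restrict S := by
        rw [← add_smul, tsub_add_cancel_of_le hdivS, one_smul]
      have h2 : ((1 : ℝ≥0∞) - ε / π T) • π.restrict T + (ε / π T) • π.restrict T
          = π.restrict T := by
        rw [← add_smul, tsub_add_cancel_of_le hdivT, one_smul]
      have h3 : ρ + α + β
          = π.restrict (S ∪ T)ᶜ
            + (((1 : ℝ≥0∞) - ε / π S) • π.restrict S + (ε / π S) • π.restrict S)
            + (((1 : ℝ≥0∞) - ε / π T) • π.restrict T + (ε / π T) • π.restrict T) := by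
        rw [hρdef, hαdef, hβdef]; abel
      rw [h3, h1, h2, add_assoc, ← Measure.restrict_union hdisj hT,
        add_comm (π.restrict (S ∪ T)ᶜ), Measure.restrict_add_restrict_compl (hS.union hT)]
    -- masses
    have hαuniv : α Set.univ = ε := by
      rw [hαdef, Measure.smul_apply, smul_eq_mul, Measure.restrict_apply_univ]
      exact ENNReal.div_mul_cancel hs0 (measure_ne_top π S)
    have hβuniv : β Set.univ = ε := by
      rw [hβdef, Measure.smul_apply, smul_eq_mul, Measure.restrict_apply_univ]
      exact ENNReal.div_mul_cancel ht0 (measure_ne_top π T)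
    set a1 := α.map Prod.fst with ha1def
    set a2 := α.map Prod.snd with ha2def
    set b1 := β.map Prod.fst with hb1def
    set b2 := β.map Prod.snd with hb2def
    have ha1univ : a1 Set.univ = ε := by
      rw [ha1def, Measure.map_apply measurable_fst MeasurableSet.univ, Set.preimage_univ, hαuniv]
    have ha2univ : a2 Set.univ = ε := by
      rw [ha2def, Measure.map_apply measurable_snd MeasurableSet.univ, Set.preimage_univ, hαuniv]
    have hb1univ : b1 Set.univ = ε := by
      rw [hb1def, Measure.map_apply measurable_fst MeasurableSet.univ, Set.preimage_univ, hβuniv]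
    have hb2univ : b2 Set.univ = ε := by
      rw [hb2def, Measure.map_apply measurable_snd MeasurableSet.univ, Set.preimage_univ, hβuniv]
    haveI : IsFiniteMeasure a1 := ⟨by rw [ha1univ]; exact hεfin.lt_top⟩
    haveI : IsFiniteMeasure a2 := ⟨by rw [ha2univ]; exact hεfin.lt_top⟩
    haveI : IsFiniteMeasure b1 := ⟨by rw [hb1univ]; exact hεfin.lt_top⟩
    haveI : IsFiniteMeasure b2 := ⟨by rw [hb2univ]; exact hεfin.lt_top⟩
    -- concentration of the marginals
    have ha1Bc : a1 Bᶜ = 0 := by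
      rw [ha1def, Measure.map_apply measurable_fst hB.compl, hαdef, Measure.smul_apply,
        smul_eq_mul, Measure.restrict_apply (measurable_fst hB.compl)]
      have : Prod.fst ⁻¹' Bᶜ ∩ S = ∅ := by
        ext ab
        simp only [Set.mem_inter_iff, Set.mem_preimage, Set.mem_compl_iff, hSdef,
          Set.mem_prod, Set.mem_empty_iff_false, iff_false, not_and]
        tauto
      rw [this, measure_empty, mul_zero]
    have ha2B : a2 B = 0 := by
      rw [ha2def, Measure.map_apply measurable_snd hB, hαdef, Measure.smul_apply,
        smul_eq_mul, Measure.restrict_apply (measurable_snd hB)]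
      have : Prod.snd ⁻¹' B ∩ S = ∅ := by
        ext ab
        simp only [Set.mem_inter_iff, Set.mem_preimage, Set.mem_compl_iff, hSdef,
          Set.mem_prod, Set.mem_empty_iff_false, iff_false, not_and]
        tauto
      rw [this, measure_empty, mul_zero]
    have hb1B : b1 B = 0 := by
      rw [hb1def, Measure.map_apply measurable_fst hB, hβdef, Measure.smul_apply,
        smul_eq_mul, Measure.restrict_apply (measurable_fst hB)]
      have : Prod.fst ⁻¹' B ∩ T = ∅ := by
        ext ab
        simp only [Set.mem_inter_iff, Set.mem_preimage, Set.mem_compl_iff, hTdef,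
          Set.mem_prod, Set.mem_empty_iff_false, iff_false, not_and]
        tauto
      rw [this, measure_empty, mul_zero]
    have hb2Bc : b2 Bᶜ = 0 := by
      rw [hb2def, Measure.map_apply measurable_snd hB.compl, hβdef, Measure.smul_apply,
        smul_eq_mul, Measure.restrict_apply (measurable_snd hB.compl)]
      have : Prod.snd ⁻¹' Bᶜ ∩ T = ∅ := by
        ext ab
        simp only [Set.mem_inter_iff, Set.mem_preimage, Set.mem_compl_iff, hTdef,
          Set.mem_prod, Set.mem_empty_iff_false, iff_false, not_and]
        tauto
      rw [this, measure_empty, mul_zero]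
    -- the competitor coupling
    set π' := ρ + ε⁻¹ • (a1.prod b2) + ε⁻¹ • (b1.prod a2) with hπ'def
    have hfst' : π'.map Prod.fst = μ := by
      rw [hπ'def, Measure.map_add _ _ measurable_fst, Measure.map_add _ _ measurable_fst,
        Measure.map_smul, Measure.map_smul, Measure.map_fst_prod, Measure.map_fst_prod,
        hb2univ, ha2univ, smul_smul, smul_smul, ENNReal.inv_mul_cancel hε0 hεfin, one_smul,
        one_smul]
      have hmaps : ρ.map Prod.fst + a1 + b1 = π.map Prod.fst := by
        rw [ha1def, hb1def, ← Measure.map_add _ _ measurable_fst,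
          ← Measure.map_add _ _ measurable_fst]
        congr 1
        rw [hdecomp]
      rw [hmaps, hfst]
    have hsnd' : π'.map Prod.snd = ν := by
      rw [hπ'def, Measure.map_add _ _ measurable_snd, Measure.map_add _ _ measurable_snd,
        Measure.map_smul, Measure.map_smul, Measure.map_snd_prod, Measure.map_snd_prod,
        ha1univ, hb1univ, smul_smul, smul_smul, ENNReal.inv_mul_cancel hε0 hεfin, one_smul,
        one_smul]
      have hmaps : ρ.map Prod.snd + b2 + a2 = π.map Prod.snd := by
        rw [ha2def, hb2def, ← Measure.map_add _ _ measurable_snd,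
          ← Measure.map_add _ _ measurable_snd]
        congr 1
        rw [hdecomp]
        abel
      rw [hmaps, hsnd]
    have hπ'univ : π' Set.univ = 1 := by
      have h1 : π' Set.univ = (π'.map Prod.fst) Set.univ := by
        rw [Measure.map_apply measurable_fst MeasurableSet.univ, Set.preimage_univ]
      rw [h1, hfst']
      exact measure_univ
    haveI hπ'prob : IsProbabilityMeasure π' := ⟨hπ'univ⟩
    have hcoup' : IsCoupling π' μ ν := ⟨hπ'prob, hfst', hsnd'⟩
    -- cost computations
    have hLπ : ∫⁻ ab, ENNReal.ofReal (dist ab.1 ab.2 ^ p) ∂π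
        = ∫⁻ ab, ENNReal.ofReal (dist ab.1 ab.2 ^ p) ∂ρ
          + ∫⁻ ab, ENNReal.ofReal (dist ab.1 ab.2 ^ p) ∂α
          + ∫⁻ ab, ENNReal.ofReal (dist ab.1 ab.2 ^ p) ∂β := by
      conv_lhs => rw [hdecomp]
      rw [lintegral_add_measure, lintegral_add_measure]
    have hLπ' : ∫⁻ ab, ENNReal.ofReal (dist ab.1 ab.2 ^ p) ∂π'
        = ∫⁻ ab, ENNReal.ofReal (dist ab.1 ab.2 ^ p) ∂ρ
          + ε⁻¹ * ∫⁻ ab, ENNReal.ofReal (dist ab.1 ab.2 ^ p) ∂(a1.prod b2)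
          + ε⁻¹ * ∫⁻ ab, ENNReal.ofReal (dist ab.1 ab.2 ^ p) ∂(b1.prod a2) := by
      rw [hπ'def, lintegral_add_measure, lintegral_add_measure, lintegral_smul_measure,
        lintegral_smul_measure, smul_eq_mul, smul_eq_mul]
    have hαae : ∀ᵐ ab ∂α, ab ∈ S := by
      rw [hαdef]
      exact Measure.ae_smul_measure (ae_restrict_mem hS) _
    have hβae : ∀ᵐ ab ∂β, ab ∈ T := by
      rw [hβdef]
      exact Measure.ae_smul_measure (ae_restrict_mem hT) _
    have hLα : ∫⁻ ab, ENNReal.ofReal (dist ab.1 ab.2 ^ p) ∂α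
        = ∫⁻ y, ENNReal.ofReal (dist x y ^ p) ∂a2 := by
      rw [ha2def, lintegral_map hG_meas measurable_snd]
      apply lintegral_congr_ae
      filter_upwards [hαae] with ab hab
      rw [ultra_out hX hab.1 hab.2]
    have hLβ : ∫⁻ ab, ENNReal.ofReal (dist ab.1 ab.2 ^ p) ∂β
        = ∫⁻ y, ENNReal.ofReal (dist x y ^ p) ∂b1 := by
      rw [hb1def, lintegral_map hG_meas measurable_fst]
      apply lintegral_congr_ae
      filter_upwards [hβae] with ab hab
      rw [dist_comm, ultra_out hX hab.2 hab.1]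
    set R := ENNReal.ofReal (r ^ p) with hRdef
    have hRfin : R ≠ ∞ := ENNReal.ofReal_ne_top
    -- the two product pieces
    have hprod1_ae : ∀ᵐ ab ∂(a1.prod b2), ab ∈ B ×ˢ B := by
      rw [ae_iff]
      have hnull : (a1.prod b2) (Bᶜ ×ˢ (Set.univ : Set X) ∪ (Set.univ : Set X) ×ˢ Bᶜ) = 0 := by
        apply measure_union_null
        · rw [Measure.prod_prod, ha1Bc, zero_mul]
        · rw [Measure.prod_prod, hb2Bc, mul_zero]
      refine measure_mono_null ?_ hnull
      intro ab hab
      simp only [Set.mem_setOf_eq, Set.mem_prod, Set.mem_union, Set.mem_compl_iff,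
        Set.mem_univ, and_true, true_and] at hab ⊢
      tauto
    have hprod2_ae : ∀ᵐ ab ∂(b1.prod a2), ab ∈ Bᶜ ×ˢ Bᶜ := by
      rw [ae_iff]
      have hnull : (b1.prod a2) (B ×ˢ (Set.univ : Set X) ∪ (Set.univ : Set X) ×ˢ B) = 0 := by
        apply measure_union_null
        · rw [Measure.prod_prod, hb1B, zero_mul]
        · rw [Measure.prod_prod, ha2B, mul_zero]
      refine measure_mono_null ?_ hnull
      intro ab hab
      simp only [Set.mem_setOf_eq, Set.mem_prod, Set.mem_union, Set.mem_compl_iff,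
        Set.mem_univ, and_true, true_and] at hab ⊢
      tauto
    have hprod1univ : (a1.prod b2) Set.univ = ε * ε := by
      rw [← Set.univ_prod_univ, Measure.prod_prod, ha1univ, hb2univ]
    have hprod2univ : (b1.prod a2) Set.univ = ε * ε := by
      rw [← Set.univ_prod_univ, Measure.prod_prod, hb1univ, ha2univ]
    have hL1 : ∫⁻ ab, ENNReal.ofReal (dist ab.1 ab.2 ^ p) ∂(a1.prod b2) ≤ R * (ε * ε) := by
      calc ∫⁻ ab, ENNReal.ofReal (dist ab.1 ab.2 ^ p) ∂(a1.prod b2)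
          ≤ ∫⁻ _, R ∂(a1.prod b2) := by
            apply lintegral_mono_ae
            filter_upwards [hprod1_ae] with ab hab
            exact ENNReal.ofReal_le_ofReal
              (Real.rpow_le_rpow dist_nonneg (ultra_in hX hab.1 hab.2) hp0.le)
        _ = R * (ε * ε) := by rw [lintegral_const, hprod1univ]
    have hGgt : ∀ y ∈ Bᶜ, R < ENNReal.ofReal (dist x y ^ p) := by
      intro y hy
      have hrd : r < dist x y := by
        simp only [Set.mem_compl_iff, hBdef, Metric.mem_closedBall, not_le] at hy
        rwa [dist_comm]
      have hlt : r ^ p < dist x y ^ p := Real.rpow_lt_rpow hr hrd hp0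
      exact (ENNReal.ofReal_lt_ofReal_iff (Real.rpow_pos_of_pos (hr.trans_lt hrd) p)).mpr hlt
    have hmin_meas : Measurable (fun ab : X × X =>
        min (ENNReal.ofReal (dist x ab.1 ^ p)) (ENNReal.ofReal (dist x ab.2 ^ p))) :=
      (hG_meas.comp measurable_fst).min (hG_meas.comp measurable_snd)
    have hIgt : R * (ε * ε) < ∫⁻ ab,
        min (ENNReal.ofReal (dist x ab.1 ^ p)) (ENNReal.ofReal (dist x ab.2 ^ p))
          ∂(b1.prod a2) := by
      have hne : b1.prod a2 ≠ 0 := by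
        apply Measure.measure_univ_ne_zero.mp
        rw [hprod2univ]
        exact mul_ne_zero hε0 hε0
      have := lintegral_const_lt (b1.prod a2) _ hmin_meas R hRfin ?_ hne
      · rwa [hprod2univ] at this
      · filter_upwards [hprod2_ae] with ab hab
        exact lt_min (hGgt _ hab.1) (hGgt _ hab.2)
    have hIle : ∫⁻ ab,
        min (ENNReal.ofReal (dist x ab.1 ^ p)) (ENNReal.ofReal (dist x ab.2 ^ p))
          ∂(b1.prod a2) ≤ ε * ∫⁻ y, ENNReal.ofReal (dist x y ^ p) ∂b1 := by
      calc ∫⁻ ab, min (ENNReal.ofReal (dist x ab.1 ^ p)) (ENNReal.ofReal (dist x ab.2 ^ p))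
            ∂(b1.prod a2)
          ≤ ∫⁻ ab, ENNReal.ofReal (dist x ab.1 ^ p) ∂(b1.prod a2) :=
            lintegral_mono fun ab => min_le_left _ _
        _ = ∫⁻ y, ENNReal.ofReal (dist x y ^ p) ∂((b1.prod a2).map Prod.fst) :=
            (lintegral_map hG_meas measurable_fst).symm
        _ = ε * ∫⁻ y, ENNReal.ofReal (dist x y ^ p) ∂b1 := by
            rw [Measure.map_fst_prod, ha2univ, lintegral_smul_measure, smul_eq_mul]
    have hsplit2 : ∫⁻ ab, (ENNReal.ofReal (dist x ab.1 ^ p) + ENNReal.ofReal (dist x ab.2 ^ p))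
        ∂(b1.prod a2)
        = ε * ∫⁻ y, ENNReal.ofReal (dist x y ^ p) ∂b1
          + ε * ∫⁻ y, ENNReal.ofReal (dist x y ^ p) ∂a2 := by
      have e1 : ∫⁻ ab, ENNReal.ofReal (dist x ab.1 ^ p) ∂(b1.prod a2)
          = ε * ∫⁻ y, ENNReal.ofReal (dist x y ^ p) ∂b1 := by
        calc ∫⁻ ab, ENNReal.ofReal (dist x ab.1 ^ p) ∂(b1.prod a2)
            = ∫⁻ y, ENNReal.ofReal (dist x y ^ p) ∂((b1.prod a2).map Prod.fst) :=
              (lintegral_map hG_meas measurable_fst).symm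
          _ = ε * ∫⁻ y, ENNReal.ofReal (dist x y ^ p) ∂b1 := by
              rw [Measure.map_fst_prod, ha2univ, lintegral_smul_measure, smul_eq_mul]
      have e2 : ∫⁻ ab, ENNReal.ofReal (dist x ab.2 ^ p) ∂(b1.prod a2)
          = ε * ∫⁻ y, ENNReal.ofReal (dist x y ^ p) ∂a2 := by
        calc ∫⁻ ab, ENNReal.ofReal (dist x ab.2 ^ p) ∂(b1.prod a2)
            = ∫⁻ y, ENNReal.ofReal (dist x y ^ p) ∂((b1.prod a2).map Prod.snd) :=
              (lintegral_map hG_meas measurable_snd).symm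
          _ = ε * ∫⁻ y, ENNReal.ofReal (dist x y ^ p) ∂a2 := by
              rw [Measure.map_snd_prod, hb1univ, lintegral_smul_measure, smul_eq_mul]
      calc ∫⁻ ab, (ENNReal.ofReal (dist x ab.1 ^ p) + ENNReal.ofReal (dist x ab.2 ^ p))
            ∂(b1.prod a2)
          = ∫⁻ ab, ENNReal.ofReal (dist x ab.1 ^ p) ∂(b1.prod a2)
            + ∫⁻ ab, ENNReal.ofReal (dist x ab.2 ^ p) ∂(b1.prod a2) :=
            lintegral_add_left
              (hG_meas.comp measurable_fst :
                Measurable fun ab : X × X => ENNReal.ofReal (dist x ab.1 ^ p)) _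
        _ = ε * ∫⁻ y, ENNReal.ofReal (dist x y ^ p) ∂b1
            + ε * ∫⁻ y, ENNReal.ofReal (dist x y ^ p) ∂a2 := by rw [e1, e2]
    have hCsum : ∀ᵐ ab ∂(b1.prod a2), ENNReal.ofReal (dist ab.1 ab.2 ^ p)
        + min (ENNReal.ofReal (dist x ab.1 ^ p)) (ENNReal.ofReal (dist x ab.2 ^ p))
        ≤ ENNReal.ofReal (dist x ab.1 ^ p) + ENNReal.ofReal (dist x ab.2 ^ p) := by
      filter_upwards [hprod2_ae] with ab hab
      rcases le_total (dist x ab.1) (dist x ab.2) with hcase | hcase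
      · have hC : ENNReal.ofReal (dist ab.1 ab.2 ^ p) ≤ ENNReal.ofReal (dist x ab.2 ^ p) := by
          apply ENNReal.ofReal_le_ofReal
          apply Real.rpow_le_rpow dist_nonneg _ hp0.le
          have h := hX ab.1 x ab.2
          rw [dist_comm ab.1 x] at h
          exact h.trans (max_le hcase le_rfl)
        calc ENNReal.ofReal (dist ab.1 ab.2 ^ p)
              + min (ENNReal.ofReal (dist x ab.1 ^ p)) (ENNReal.ofReal (dist x ab.2 ^ p))
            ≤ ENNReal.ofReal (dist x ab.2 ^ p) + ENNReal.ofReal (dist x ab.1 ^ p) :=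
              add_le_add hC (min_le_left _ _)
          _ = _ := add_comm _ _
      · have hC : ENNReal.ofReal (dist ab.1 ab.2 ^ p) ≤ ENNReal.ofReal (dist x ab.1 ^ p) := by
          apply ENNReal.ofReal_le_ofReal
          apply Real.rpow_le_rpow dist_nonneg _ hp0.le
          have h := hX ab.1 x ab.2
          rw [dist_comm ab.1 x] at h
          exact h.trans (max_le le_rfl hcase)
        exact add_le_add hC (min_le_right _ _)
    have hL2 : ∫⁻ ab, ENNReal.ofReal (dist ab.1 ab.2 ^ p) ∂(b1.prod a2)
        + ∫⁻ ab, min (ENNReal.ofReal (dist x ab.1 ^ p)) (ENNReal.ofReal (dist x ab.2 ^ p))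
          ∂(b1.prod a2)
        ≤ ε * ∫⁻ y, ENNReal.ofReal (dist x y ^ p) ∂b1
          + ε * ∫⁻ y, ENNReal.ofReal (dist x y ^ p) ∂a2 := by
      calc ∫⁻ ab, ENNReal.ofReal (dist ab.1 ab.2 ^ p) ∂(b1.prod a2)
            + ∫⁻ ab, min (ENNReal.ofReal (dist x ab.1 ^ p)) (ENNReal.ofReal (dist x ab.2 ^ p))
              ∂(b1.prod a2)
          = ∫⁻ ab, (ENNReal.ofReal (dist ab.1 ab.2 ^ p)
              + min (ENNReal.ofReal (dist x ab.1 ^ p)) (ENNReal.ofReal (dist x ab.2 ^ p)))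
              ∂(b1.prod a2) := (lintegral_add_left hC_meas _).symm
        _ ≤ ∫⁻ ab, (ENNReal.ofReal (dist x ab.1 ^ p) + ENNReal.ofReal (dist x ab.2 ^ p))
              ∂(b1.prod a2) := lintegral_mono_ae hCsum
        _ = ε * ∫⁻ y, ENNReal.ofReal (dist x y ^ p) ∂b1
            + ε * ∫⁻ y, ENNReal.ofReal (dist x y ^ p) ∂a2 := hsplit2
    -- finiteness bookkeeping
    have hb1fin : ∫⁻ y, ENNReal.ofReal (dist x y ^ p) ∂b1 ≠ ∞ :=
      gfin b1 (by rw [hb1univ]; exact hεfin)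
    have ha2fin : ∫⁻ y, ENNReal.ofReal (dist x y ^ p) ∂a2 ≠ ∞ :=
      gfin a2 (by rw [ha2univ]; exact hεfin)
    have hKfin : ε * ∫⁻ y, ENNReal.ofReal (dist x y ^ p) ∂b1
        + ε * ∫⁻ y, ENNReal.ofReal (dist x y ^ p) ∂a2 ≠ ∞ :=
      ENNReal.add_ne_top.mpr ⟨ENNReal.mul_ne_top hεfin hb1fin, ENNReal.mul_ne_top hεfin ha2fin⟩
    have hL2fin : ∫⁻ ab, ENNReal.ofReal (dist ab.1 ab.2 ^ p) ∂(b1.prod a2) ≠ ∞ :=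
      costfin _ (by rw [hprod2univ]; exact ENNReal.mul_ne_top hεfin hεfin)
    have hεinvfin : ε⁻¹ ≠ ∞ := ENNReal.inv_ne_top.mpr hε0
    have hεinv0 : ε⁻¹ ≠ 0 := ENNReal.inv_ne_zero.mpr hεfin
    -- the key strict inequality
    have hmain : ε⁻¹ * ∫⁻ ab, ENNReal.ofReal (dist ab.1 ab.2 ^ p) ∂(a1.prod b2)
        + ε⁻¹ * ∫⁻ ab, ENNReal.ofReal (dist ab.1 ab.2 ^ p) ∂(b1.prod a2)
        < ∫⁻ ab, ENNReal.ofReal (dist ab.1 ab.2 ^ p) ∂α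
          + ∫⁻ ab, ENNReal.ofReal (dist ab.1 ab.2 ^ p) ∂β := by
      rw [hLα, hLβ]
      have step1 : ε⁻¹ * ∫⁻ ab, ENNReal.ofReal (dist ab.1 ab.2 ^ p) ∂(a1.prod b2)
          + ε⁻¹ * ∫⁻ ab, ENNReal.ofReal (dist ab.1 ab.2 ^ p) ∂(b1.prod a2)
          ≤ ε⁻¹ * (R * (ε * ε))
            + ε⁻¹ * ∫⁻ ab, ENNReal.ofReal (dist ab.1 ab.2 ^ p) ∂(b1.prod a2) :=
        add_le_add_left (mul_le_mul_of_nonneg_left hL1 zero_le) _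
      have step2 : ε⁻¹ * (R * (ε * ε))
            + ε⁻¹ * ∫⁻ ab, ENNReal.ofReal (dist ab.1 ab.2 ^ p) ∂(b1.prod a2)
          < ε⁻¹ * ∫⁻ ab,
              min (ENNReal.ofReal (dist x ab.1 ^ p)) (ENNReal.ofReal (dist x ab.2 ^ p))
                ∂(b1.prod a2)
            + ε⁻¹ * ∫⁻ ab, ENNReal.ofReal (dist ab.1 ab.2 ^ p) ∂(b1.prod a2) := by
        apply ENNReal.add_lt_add_right (ENNReal.mul_ne_top hεinvfin hL2fin)
        exact ENNReal.mul_lt_mul_right hεinv0 hεinvfin hIgt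
      have step3 : ε⁻¹ * ∫⁻ ab,
              min (ENNReal.ofReal (dist x ab.1 ^ p)) (ENNReal.ofReal (dist x ab.2 ^ p))
                ∂(b1.prod a2)
            + ε⁻¹ * ∫⁻ ab, ENNReal.ofReal (dist ab.1 ab.2 ^ p) ∂(b1.prod a2)
          ≤ ∫⁻ y, ENNReal.ofReal (dist x y ^ p) ∂a2
            + ∫⁻ y, ENNReal.ofReal (dist x y ^ p) ∂b1 := by
        rw [← mul_add]
        calc ε⁻¹ * (∫⁻ ab, min (ENNReal.ofReal (dist x ab.1 ^ p))
                (ENNReal.ofReal (dist x ab.2 ^ p)) ∂(b1.prod a2)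
              + ∫⁻ ab, ENNReal.ofReal (dist ab.1 ab.2 ^ p) ∂(b1.prod a2))
            ≤ ε⁻¹ * (ε * ∫⁻ y, ENNReal.ofReal (dist x y ^ p) ∂b1
              + ε * ∫⁻ y, ENNReal.ofReal (dist x y ^ p) ∂a2) := by
              refine mul_le_mul_of_nonneg_left ?_ zero_le
              rw [add_comm]
              exact hL2
          _ = ∫⁻ y, ENNReal.ofReal (dist x y ^ p) ∂b1
              + ∫⁻ y, ENNReal.ofReal (dist x y ^ p) ∂a2 := by
              rw [mul_add, ← mul_assoc, ← mul_assoc, ENNReal.inv_mul_cancel hε0 hεfin,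
                one_mul, one_mul]
          _ = _ := add_comm _ _
      exact lt_of_le_of_lt step1 (lt_of_lt_of_le step2 step3)
    -- finish: the competitor is strictly cheaper, contradicting optimality
    have hρfin : ρ Set.univ ≠ ∞ := by
      rw [hρdef, Measure.add_apply, Measure.add_apply, Measure.smul_apply, Measure.smul_apply,
        smul_eq_mul, smul_eq_mul, Measure.restrict_apply_univ, Measure.restrict_apply_univ,
        Measure.restrict_apply_univ]
      exact ENNReal.add_ne_top.mpr ⟨ENNReal.add_ne_top.mpr ⟨measure_ne_top _ _,
        ENNReal.mul_ne_top (ne_top_of_le_ne_top ENNReal.one_ne_top tsub_le_self)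
          (measure_ne_top _ _)⟩,
        ENNReal.mul_ne_top (ne_top_of_le_ne_top ENNReal.one_ne_top tsub_le_self)
          (measure_ne_top _ _)⟩
    have hLlt : ∫⁻ ab, ENNReal.ofReal (dist ab.1 ab.2 ^ p) ∂π'
        < ∫⁻ ab, ENNReal.ofReal (dist ab.1 ab.2 ^ p) ∂π := by
      rw [hLπ, hLπ', add_assoc, add_assoc]
      exact ENNReal.add_lt_add_left (costfin ρ hρfin) hmain
    have hint_lt : ∫ ab, dist ab.1 ab.2 ^ p ∂π' < ∫ ab, dist ab.1 ab.2 ^ p ∂π := by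
      rw [int_eq π', int_eq π]
      exact (ENNReal.toReal_lt_toReal (costfin π' (measure_ne_top _ _))
        (costfin π (measure_ne_top _ _))).mpr hLlt
    -- Wasserstein infimum manipulation
    have hbddS : BddBelow {c : ℝ | ∃ π'' : Measure (X × X), IsCoupling π'' μ ν ∧
        c = ∫ ab, dist ab.1 ab.2 ^ p ∂π''} := by
      refine ⟨0, fun c hc => ?_⟩
      obtain ⟨π'', -, hc⟩ := hc
      rw [hc]
      exact integral_nonneg hc_nonneg
    have hmemπ : (∫ ab, dist ab.1 ab.2 ^ p ∂π) ∈ {c : ℝ | ∃ π'' : Measure (X × X),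
        IsCoupling π'' μ ν ∧ c = ∫ ab, dist ab.1 ab.2 ^ p ∂π''} :=
      ⟨π, ⟨hπprob, hfst, hsnd⟩, rfl⟩
    have hmemπ' : (∫ ab, dist ab.1 ab.2 ^ p ∂π') ∈ {c : ℝ | ∃ π'' : Measure (X × X),
        IsCoupling π'' μ ν ∧ c = ∫ ab, dist ab.1 ab.2 ^ p ∂π''} :=
      ⟨π', hcoup', rfl⟩
    have hInf_nonneg : 0 ≤ sInf {c : ℝ | ∃ π'' : Measure (X × X), IsCoupling π'' μ ν ∧
        c = ∫ ab, dist ab.1 ab.2 ^ p ∂π''} := by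
      apply le_csInf ⟨_, hmemπ⟩
      rintro c ⟨π'', -, hc⟩
      rw [hc]
      exact integral_nonneg hc_nonneg
    have hopt' : ∫ ab, dist ab.1 ab.2 ^ p ∂π
        = sInf {c : ℝ | ∃ π'' : Measure (X × X), IsCoupling π'' μ ν ∧
            c = ∫ ab, dist ab.1 ab.2 ^ p ∂π''} := by
      rw [hopt, Wp, ← Real.rpow_mul hInf_nonneg, one_div_mul_cancel (ne_of_gt hp0),
        Real.rpow_one]
    have hle := csInf_le hbddS hmemπ'
    rw [← hopt'] at hle
    exact absurd (lt_of_le_of_lt hle hint_lt) (lt_irrefl _)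

  -- wrap-up arithmetic
  have haf : π (B ×ˢ B) ≠ ∞ := measure_ne_top _ _
  have hsf : π S ≠ ∞ := measure_ne_top _ _
  have htf : π T ≠ ∞ := measure_ne_top _ _
  rcases key with h | h
  · rw [h]
    have hμ' : (μ B).toReal = (π (B ×ˢ B)).toReal := by rw [hμB, h, add_zero]
    have hν' : (ν B).toReal = (π (B ×ˢ B)).toReal + (π T).toReal := by
      rw [hνB, ENNReal.toReal_add haf htf]
    have ht0 : 0 ≤ (π T).toReal := ENNReal.toReal_nonneg
    simp only [ENNReal.toReal_zero]
    rw [max_eq_right (by rw [hμ', hν']; linarith)]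
  · have hμ' : (μ B).toReal = (π (B ×ˢ B)).toReal + (π S).toReal := by
      rw [hμB, ENNReal.toReal_add haf hsf]
    have hν' : (ν B).toReal = (π (B ×ˢ B)).toReal := by rw [hνB, h, add_zero]
    have hs0 : 0 ≤ (π S).toReal := ENNReal.toReal_nonneg
    rw [max_eq_left (by rw [hμ', hν']; linarith)]
    rw [hμ', hν']; ring
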